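/- The matrix X₁ is invertible, the matrix I + W̃₁ with W̃₁ = (1/2)X₁⁻¹Y₁ is invertible, and every eigenvalue μ of (I + W̃₁)⁻¹(I − W̃₁) satisfies |μ| < 1; that is, the Crank–Nicolson compact scheme for the constant-coefficient convection–diffusion equation is unconditionally stable. -/

import Mathlib

/-- The `(N-1)×(N-1)` tridiagonal complex matrix with 1-indexed subdiagonal entries
`sub_{i+1}` (at position `(i+1, i)`), diagonal entries `dia_i` and superdiagonal
entries `sup_i` (at position `(i, i+1)`), built from real data. -/
def triMatC (n : ℕ) (sub dia sup : ℕ → ℝ) : Matrix (Fin n) (Fin n) ℂ :=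
  Matrix.of fun i j =>
    if i.val = j.val then (dia (i.val + 1) : ℂ)
    else if i.val + 1 = j.val then (sup (i.val + 1) : ℂ)
    else if j.val + 1 = i.val then (sub (i.val + 1) : ℂ)
    else 0

/-- `μ` is an eigenvalue of the square complex matrix `M` if `M v = μ v` for some
nonzero vector `v`. -/
def IsEig {n : ℕ} (M : Matrix (Fin n) (Fin n) ℂ) (μ : ℂ) : Prop :=
  ∃ v : Fin n → ℂ, v ≠ 0 ∧ M.mulVec v = μ • v

/-- `c₁ = (2 + δz)/(24 δv)`. -/
noncomputable def cc1 (δv δz : ℝ) : ℝ := (2 + δz) / (24 * δv)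

/-- `c₂ = 5/(6 δv)`. -/
noncomputable def cc2 (δv : ℝ) : ℝ := 5 / (6 * δv)

/-- `c₃ = (2 - δz)/(24 δv)`. -/
noncomputable def cc3 (δv δz : ℝ) : ℝ := (2 - δz) / (24 * δv)

/-- `y₁ = -c/(2δz) - (c + c δz²/12)/δz²`. -/
noncomputable def yy1 (c δz : ℝ) : ℝ := -c / (2 * δz) - (c + c * δz ^ 2 / 12) / δz ^ 2

/-- `y₂ = 2 (c + c δz²/12)/δz²`. -/
noncomputable def yy2 (c δz : ℝ) : ℝ := 2 * (c + c * δz ^ 2 / 12) / δz ^ 2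

/-- `y₃ = c/(2δz) - (c + c δz²/12)/δz²`. -/
noncomputable def yy3 (c δz : ℝ) : ℝ := c / (2 * δz) - (c + c * δz ^ 2 / 12) / δz ^ 2

/-- The `(N-1)×(N-1)` tridiagonal Toeplitz matrix `X₁` with subdiagonal `c₁`,
diagonal `c₂` and superdiagonal `c₃`. -/
noncomputable def X1mat (δv δz : ℝ) (N : ℕ) : Matrix (Fin (N - 1)) (Fin (N - 1)) ℂ :=
  triMatC (N - 1) (fun _ => cc1 δv δz) (fun _ => cc2 δv) (fun _ => cc3 δv δz)

/-- The `(N-1)×(N-1)` tridiagonal Toeplitz matrix `Y₁` with subdiagonal `y₁`,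
diagonal `y₂` and superdiagonal `y₃`. -/
noncomputable def Y1mat (c δz : ℝ) (N : ℕ) : Matrix (Fin (N - 1)) (Fin (N - 1)) ℂ :=
  triMatC (N - 1) (fun _ => yy1 c δz) (fun _ => yy2 c δz) (fun _ => yy3 c δz)

open Finset Matrix Complex

/-- superdiagonal shift matrix -/
def Umat (n : ℕ) : Matrix (Fin n) (Fin n) ℂ :=
  Matrix.of fun i j => if i.val + 1 = j.val then 1 else 0

lemma tri_decomp (n : ℕ) (α β γ : ℝ) :
    triMatC n (fun _ => α) (fun _ => β) (fun _ => γ)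
      = (β : ℂ) • (1 : Matrix (Fin n) (Fin n) ℂ) + (γ : ℂ) • Umat n + (α : ℂ) • (Umat n)ᵀ := by
  ext i j
  simp only [triMatC, Umat, Matrix.of_apply, Matrix.add_apply, Matrix.smul_apply,
    Matrix.one_apply, Matrix.transpose_apply, smul_eq_mul, Fin.ext_iff]
  split_ifs <;> first | (exfalso; omega) | ring

lemma qf_const (n : ℕ) (α β γ : ℝ) (v : Fin n → ℂ) :
    star v ⬝ᵥ (triMatC n (fun _ => α) (fun _ => β) (fun _ => γ)).mulVec v
      = (β : ℂ) * (star v ⬝ᵥ v) + (γ : ℂ) * (star v ⬝ᵥ (Umat n).mulVec v)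
        + (α : ℂ) * (star v ⬝ᵥ (Umat n)ᵀ.mulVec v) := by
  rw [tri_decomp]
  simp [Matrix.add_mulVec, Matrix.smul_mulVec, dotProduct_add, dotProduct_smul,
    smul_eq_mul, Matrix.one_mulVec]

lemma dot_transpose {n : ℕ} (M : Matrix (Fin n) (Fin n) ℂ)
    (hM : ∀ i j, (starRingEnd ℂ) (M i j) = M i j) (v : Fin n → ℂ) :
    star v ⬝ᵥ Mᵀ.mulVec v = (starRingEnd ℂ) (star v ⬝ᵥ M.mulVec v) := by
  unfold Matrix.mulVec dotProduct
  simp only [Pi.star_apply, Matrix.transpose_apply, Complex.star_def, map_sum,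
    Finset.mul_sum]
  rw [Finset.sum_comm]
  refine Finset.sum_congr rfl fun i _ => Finset.sum_congr rfl fun j _ => ?_
  rw [_root_.map_mul, _root_.map_mul, hM, Complex.conj_conj]
  ring

def vext (n : ℕ) (v : Fin n → ℂ) : ℕ → ℂ := fun k => if h : k < n then v ⟨k, h⟩ else 0

lemma vext_of_fin (n : ℕ) (v : Fin n → ℂ) (i : Fin n) : vext n v i.val = v i := by
  simp [vext, i.isLt]

lemma vext_of_ge (n : ℕ) (v : Fin n → ℂ) (k : ℕ) (h : n ≤ k) : vext n v k = 0 := by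
  simp [vext, Nat.not_lt.2 h]

lemma dot_one (n : ℕ) (v : Fin n → ℂ) :
    star v ⬝ᵥ v = ((∑ i ∈ range n, Complex.normSq (vext n v i) : ℝ) : ℂ) := by
  unfold dotProduct
  push_cast
  rw [← Fin.sum_univ_eq_sum_range (fun k => ((Complex.normSq (vext n v k) : ℝ) : ℂ)) n]
  refine Finset.sum_congr rfl fun i _ => ?_
  rw [vext_of_fin]
  simp [Complex.star_def, Complex.normSq_eq_conj_mul_self]

lemma mulVec_Umat (n : ℕ) (v : Fin n → ℂ) (i : Fin n) :
    (Umat n).mulVec v i = vext n v (i.val + 1) := by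
  unfold Matrix.mulVec dotProduct Umat
  simp only [Matrix.of_apply, ite_mul, one_mul, zero_mul]
  have : ∀ j : Fin n, (if i.val + 1 = j.val then v j else 0)
      = (fun k => if i.val + 1 = k then vext n v k else 0) j.val := by
    intro j; simp [vext_of_fin]
  rw [Finset.sum_congr rfl (fun j _ => this j),
    Fin.sum_univ_eq_sum_range (fun k => if i.val + 1 = k then vext n v k else 0) n,
    Finset.sum_ite_eq]
  split_ifs with h
  · rfl
  · rw [vext_of_ge]
    simpa using h

lemma dot_U (n : ℕ) (v : Fin n → ℂ) :
    star v ⬝ᵥ (Umat n).mulVec v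
      = ∑ i ∈ range n, (starRingEnd ℂ) (vext n v i) * vext n v (i + 1) := by
  unfold dotProduct
  rw [← Fin.sum_univ_eq_sum_range (fun k => (starRingEnd ℂ) (vext n v k) * vext n v (k + 1)) n]
  refine Finset.sum_congr rfl fun i _ => ?_
  rw [mulVec_Umat, vext_of_fin]
  simp [Complex.star_def]

set_option maxHeartbeats 1000000 in
lemma real_key (c δv δz Pr x y : ℝ) (hc : 0 < c) (hδv : 0 < δv) (hδz0 : 0 < δz)
    (hδz2 : δz < 2) (hP : 0 < Pr) (hZ : x ^ 2 + y ^ 2 ≤ Pr ^ 2) (hx : x < Pr) :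
    0 < cc2 δv * Pr + cc3 δv δz * x + cc1 δv δz * x ∧
    0 < yy2 c δz * Pr + yy3 c δz * x + yy1 c δz * x ∧
    0 < (yy2 c δz * Pr + yy3 c δz * x + yy1 c δz * x) * (cc2 δv * Pr + cc3 δv δz * x + cc1 δv δz * x)
        + (yy3 c δz * y - yy1 c δz * y) * (cc3 δv δz * y - cc1 δv δz * y) := by
  have hδz : δz ≠ 0 := hδz0.ne'
  have hδv' : δv ≠ 0 := hδv.ne'
  have hxm : -Pr ≤ x := by nlinarith [sq_nonneg (x + Pr), sq_nonneg y]
  have h5 : 0 < 5 * Pr + x := by linarith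
  have hPx : 0 < Pr - x := by linarith
  set K : ℝ := (c + c * δz ^ 2 / 12) / δz ^ 2 with hK
  have hKpos : 0 < K := by
    apply div_pos
    · nlinarith [sq_nonneg δz]
    · positivity
  have hδzsq : δz ^ 2 < 4 := by nlinarith
  have hc4 : c / 4 * δz ^ 2 < c := by nlinarith
  have hc12 : 0 ≤ c * δz ^ 2 / 12 := by positivity
  have hKc : c / 4 < K := by
    rw [hK, lt_div_iff₀ (by positivity : (0:ℝ) < δz ^ 2)]
    linarith
  have hy1 : yy1 c δz = -c / (2 * δz) - K := by rw [hK]; unfold yy1; ring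
  have hy2 : yy2 c δz = 2 * K := by rw [hK]; unfold yy2; ring
  have hy3 : yy3 c δz = c / (2 * δz) - K := by rw [hK]; unfold yy3; ring
  clear_value K
  clear hK
  have e1 : cc2 δv * Pr + cc3 δv δz * x + cc1 δv δz * x = (20 * Pr + 4 * x) / (24 * δv) := by
    unfold cc1 cc2 cc3
    field_simp
    ring
  have e2 : yy2 c δz * Pr + yy3 c δz * x + yy1 c δz * x = 2 * K * (Pr - x) := by
    rw [hy1, hy2, hy3]
    ring
  have e3 : (yy2 c δz * Pr + yy3 c δz * x + yy1 c δz * x) * (cc2 δv * Pr + cc3 δv δz * x + cc1 δv δz * x)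
        + (yy3 c δz * y - yy1 c δz * y) * (cc3 δv δz * y - cc1 δv δz * y)
      = (4 * K * ((Pr - x) * (5 * Pr + x)) - c * y ^ 2) / (12 * δv) := by
    rw [hy1, hy2, hy3]
    unfold cc1 cc2 cc3
    field_simp
    ring
  refine ⟨?_, ?_, ?_⟩
  · rw [e1]
    apply div_pos (by linarith) (by linarith)
  · rw [e2]
    positivity
  · rw [e3]
    apply div_pos ?_ (by linarith)
    have hy2 : y ^ 2 ≤ (Pr - x) * (Pr + x) := by nlinarith
    have h1 : c * y ^ 2 ≤ c * ((Pr - x) * (Pr + x)) := by nlinarith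
    have h2 : (Pr - x) * (Pr + x) ≤ (Pr - x) * (5 * Pr + x) := by nlinarith
    have h3 : c * ((Pr - x) * (5 * Pr + x)) < 4 * K * ((Pr - x) * (5 * Pr + x)) := by
      have hq : 0 < (Pr - x) * (5 * Pr + x) := mul_pos hPx h5
      nlinarith
    nlinarith

theorem quadform (c δv δz : ℝ) (hc : 0 < c) (hδv : 0 < δv) (hδz0 : 0 < δz) (hδz2 : δz < 2)
    (n : ℕ) (v : Fin n → ℂ) (hv : v ≠ 0) :
    0 < (star v ⬝ᵥ (triMatC n (fun _ => cc1 δv δz) (fun _ => cc2 δv) (fun _ => cc3 δv δz)).mulVec v).re ∧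
    0 < (star v ⬝ᵥ (triMatC n (fun _ => yy1 c δz) (fun _ => yy2 c δz) (fun _ => yy3 c δz)).mulVec v).re ∧
    0 < ((star v ⬝ᵥ (triMatC n (fun _ => yy1 c δz) (fun _ => yy2 c δz) (fun _ => yy3 c δz)).mulVec v) *
      (starRingEnd ℂ) (star v ⬝ᵥ (triMatC n (fun _ => cc1 δv δz) (fun _ => cc2 δv) (fun _ => cc3 δv δz)).mulVec v)).re := by
  set w : ℕ → ℂ := vext n v with hw
  set Pr : ℝ := ∑ i ∈ range n, Complex.normSq (w i) with hPr
  set Z : ℂ := ∑ i ∈ range n, (starRingEnd ℂ) (w i) * w (i + 1) with hZdef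
  -- basic facts
  have hwv : ∀ i : Fin n, w i.val = v i := fun i => vext_of_fin n v i
  have hwge : ∀ k, n ≤ k → w k = 0 := fun k h => vext_of_ge n v k h
  obtain ⟨j0, hj0⟩ : ∃ j, v j ≠ 0 := Function.ne_iff.mp hv
  have hPpos : 0 < Pr := by
    have h1 : Complex.normSq (v j0) ≤ Pr := by
      rw [hPr, ← hwv j0]
      exact Finset.single_le_sum (f := fun i => Complex.normSq (w i))
        (fun i _ => Complex.normSq_nonneg _) (by simpa using j0.isLt)
    have h2 : 0 < Complex.normSq (v j0) := by
      simpa [Complex.normSq_pos] using hj0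
    linarith
  -- shift sum
  have hshift : ∑ i ∈ range n, Complex.normSq (w (i + 1)) = Pr - Complex.normSq (w 0) := by
    have h := Finset.sum_range_succ' (fun i => Complex.normSq (w i)) n
    have h2 : ∑ i ∈ range (n + 1), Complex.normSq (w i) = Pr := by
      rw [Finset.sum_range_succ, hwge n le_rfl]
      simp [hPr]
    rw [h2] at h
    linarith
  -- |Z| bound
  have habs : ‖Z‖ ≤ Pr := by
    calc ‖Z‖ ≤ ∑ i ∈ range n, ‖(starRingEnd ℂ) (w i) * w (i + 1)‖ := by
          rw [hZdef]; exact norm_sum_le _ _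
      _ ≤ ∑ i ∈ range n, (Complex.normSq (w i) + Complex.normSq (w (i + 1))) / 2 := by
          refine Finset.sum_le_sum fun i _ => ?_
          rw [norm_mul, Complex.norm_conj]
          have h1 := Complex.sq_norm (w i)
          have h2 := Complex.sq_norm (w (i + 1))
          nlinarith [norm_nonneg (w i), norm_nonneg (w (i + 1)),
            sq_nonneg (‖w i‖ - ‖w (i + 1)‖)]
      _ = (Pr + (Pr - Complex.normSq (w 0))) / 2 := by
          rw [← Finset.sum_div, Finset.sum_add_distrib, ← hPr, hshift]
      _ ≤ Pr := by linarith [Complex.normSq_nonneg (w 0)]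
  have hZsq : Z.re ^ 2 + Z.im ^ 2 ≤ Pr ^ 2 := by
    have h1 : Complex.normSq Z ≤ Pr ^ 2 := by
      have := Complex.sq_norm Z
      nlinarith [norm_nonneg Z]
    simpa [Complex.normSq_apply, sq] using h1
  -- strict bound Z.re < Pr
  have hdiff : ∑ i ∈ range n, Complex.normSq (w (i + 1) - w i)
      = 2 * Pr - 2 * Z.re - Complex.normSq (w 0) := by
    have hterm : ∀ i ∈ range n, Complex.normSq (w (i + 1) - w i)
        = Complex.normSq (w (i + 1)) + Complex.normSq (w i)
          - 2 * ((starRingEnd ℂ) (w i) * w (i + 1)).re := by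
      intro i _
      rw [Complex.normSq_sub]
      ring_nf
    rw [Finset.sum_congr rfl hterm, Finset.sum_sub_distrib, Finset.sum_add_distrib, hshift,
      ← Finset.mul_sum, ← Complex.re_sum, ← hZdef, ← hPr]
    ring
  have hxlt : Z.re < Pr := by
    have hnn : 0 ≤ ∑ i ∈ range n, Complex.normSq (w (i + 1) - w i) :=
      Finset.sum_nonneg fun i _ => Complex.normSq_nonneg _
    have hnn0 : 0 ≤ Complex.normSq (w 0) := Complex.normSq_nonneg _
    rcases lt_or_eq_of_le (by linarith : Z.re ≤ Pr) with h | h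
    · exact h
    · exfalso
      -- equality forces w = 0
      have hs0 : ∑ i ∈ range n, Complex.normSq (w (i + 1) - w i) = 0 ∧ Complex.normSq (w 0) = 0 := by
        constructor <;> linarith [hdiff, h]
      have hall : ∀ i ∈ range n, Complex.normSq (w (i + 1) - w i) = 0 :=
        (Finset.sum_eq_zero_iff_of_nonneg (fun i _ => Complex.normSq_nonneg _)).1 hs0.1
      have hw0 : w 0 = 0 := Complex.normSq_eq_zero.1 hs0.2
      have hzero : ∀ k, k ≤ n → w k = 0 := by
        intro k
        induction k with
        | zero => intro _; exact hw0
        | succ m ih =>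
          intro hm
          have hmn : m ∈ range n := by simp; omega
          have := Complex.normSq_eq_zero.1 (hall m hmn)
          have hwm : w m = 0 := ih (by omega)
          have : w (m + 1) - w m = 0 := this
          rw [hwm, sub_zero] at this
          exact this
      apply hj0
      rw [← hwv j0]
      exact hzero j0.val (le_of_lt j0.isLt)
  -- quadratic forms
  have hMreal : ∀ i j, (starRingEnd ℂ) (Umat n i j) = Umat n i j := by
    intro i j
    unfold Umat
    simp only [Matrix.of_apply]
    split_ifs <;> simp
  have hU : star v ⬝ᵥ (Umat n).mulVec v = Z := by
    rw [hZdef, hw]; exact dot_U n v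
  have hUt : star v ⬝ᵥ (Umat n)ᵀ.mulVec v = (starRingEnd ℂ) Z := by
    rw [dot_transpose (Umat n) hMreal v, hU]
  have hone : star v ⬝ᵥ v = ((Pr : ℝ) : ℂ) := by
    rw [hPr, hw]; exact dot_one n v
  have hX : star v ⬝ᵥ (triMatC n (fun _ => cc1 δv δz) (fun _ => cc2 δv) (fun _ => cc3 δv δz)).mulVec v
      = (cc2 δv : ℂ) * (Pr : ℝ) + (cc3 δv δz : ℂ) * Z + (cc1 δv δz : ℂ) * (starRingEnd ℂ) Z := by
    rw [qf_const, hone, hU, hUt]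
  have hY : star v ⬝ᵥ (triMatC n (fun _ => yy1 c δz) (fun _ => yy2 c δz) (fun _ => yy3 c δz)).mulVec v
      = (yy2 c δz : ℂ) * (Pr : ℝ) + (yy3 c δz : ℂ) * Z + (yy1 c δz : ℂ) * (starRingEnd ℂ) Z := by
    rw [qf_const, hone, hU, hUt]
  obtain ⟨h1, h2, h3⟩ := real_key c δv δz Pr Z.re Z.im hc hδv hδz0 hδz2 hPpos hZsq hxlt
  refine ⟨?_, ?_, ?_⟩
  · rw [hX]
    simpa [Complex.add_re, Complex.mul_re] using h1
  · rw [hY]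
    simpa [Complex.add_re, Complex.mul_re] using h2
  · rw [hX, hY]
    simp only [Complex.mul_re, Complex.add_re, Complex.add_im, Complex.mul_im,
      Complex.ofReal_re, Complex.ofReal_im, Complex.conj_re, Complex.conj_im]
    ring_nf
    ring_nf at h3
    linarith

lemma cayley_abs (p r μ : ℂ) (hp : 0 < p.re) (hr : 0 < r.re)
    (hg : 0 < (r * (starRingEnd ℂ) p).re)
    (h : 2 * p - r = μ * (2 * p + r)) : ‖μ‖ < 1 := by
  have hgre : 0 < r.re * p.re + r.im * p.im := by
    simpa [Complex.mul_re, Complex.conj_re, Complex.conj_im] using hg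
  have hqre : 0 < (2 * p + r).re := by
    simp only [Complex.add_re, Complex.mul_re, Complex.re_ofNat, Complex.im_ofNat]
    linarith [hp]
  have hq0 : 2 * p + r ≠ 0 := fun h0 => by rw [h0] at hqre; simp at hqre
  have habs : ‖2 * p - r‖ < ‖2 * p + r‖ := by
    have hns : Complex.normSq (2 * p - r) < Complex.normSq (2 * p + r) := by
      simp only [Complex.normSq_apply, Complex.add_re, Complex.add_im, Complex.sub_re,
        Complex.sub_im, Complex.mul_re, Complex.mul_im, Complex.re_ofNat, Complex.im_ofNat]
      nlinarith
    rw [Complex.norm_def, Complex.norm_def]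
    exact Real.sqrt_lt_sqrt (Complex.normSq_nonneg _) hns
  have habs2 := congrArg (‖·‖) h
  rw [norm_mul] at habs2
  rw [habs2] at habs
  have ht : 0 < ‖2 * p + r‖ := norm_pos_iff.mpr hq0
  exact (mul_lt_iff_lt_one_left ht).mp habs


/-- `X₁` is invertible, `I + W̃₁` (with `W̃₁ = (1/2) X₁⁻¹ Y₁`) is invertible, and every
eigenvalue `μ` of `(I + W̃₁)⁻¹ (I - W̃₁)` satisfies `|μ| < 1`: the Crank–Nicolson
compact scheme for the constant-coefficient convection–diffusion equation is
unconditionally stable. -/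
theorem stmt12 (c δv δz : ℝ) (hc : 0 < c) (hδv : 0 < δv) (hδz0 : 0 < δz)
    (hδz2 : δz < 2) (N : ℕ) (hN : 2 ≤ N) :
    IsUnit (X1mat δv δz N).det ∧
    IsUnit (1 + (1 / 2 : ℂ) • ((X1mat δv δz N)⁻¹ * Y1mat c δz N)).det ∧
    ∀ μ : ℂ,
      IsEig ((1 + (1 / 2 : ℂ) • ((X1mat δv δz N)⁻¹ * Y1mat c δz N))⁻¹ *
        (1 - (1 / 2 : ℂ) • ((X1mat δv δz N)⁻¹ * Y1mat c δz N))) μ →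
      ‖μ‖ < 1 := by
  have key : ∀ v : Fin (N-1) → ℂ, v ≠ 0 →
      0 < (star v ⬝ᵥ (X1mat δv δz N).mulVec v).re ∧
      0 < (star v ⬝ᵥ (Y1mat c δz N).mulVec v).re ∧
      0 < ((star v ⬝ᵥ (Y1mat c δz N).mulVec v) *
        (starRingEnd ℂ) (star v ⬝ᵥ (X1mat δv δz N).mulVec v)).re := by
    intro v hv
    exact quadform c δv δz hc hδv hδz0 hδz2 (N-1) v hv
  set X := X1mat δv δz N with hXd
  set Y := Y1mat c δz N with hYd
  have hXdet : IsUnit X.det := by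
    rw [isUnit_iff_ne_zero]
    intro h0
    obtain ⟨v, hv, hv0⟩ := Matrix.exists_mulVec_eq_zero_iff.2 h0
    have h1 := (key v hv).1
    rw [hv0] at h1
    simp at h1
  have hXinv : X * X⁻¹ = 1 := Matrix.mul_nonsing_inv _ hXdet
  set W : Matrix (Fin (N-1)) (Fin (N-1)) ℂ := (1/2 : ℂ) • (X⁻¹ * Y) with hW
  have hXW : X * W = (1/2 : ℂ) • Y := by
    rw [hW, Matrix.mul_smul, ← Matrix.mul_assoc, hXinv, Matrix.one_mul]
  have main2 : IsUnit (1 + W).det := by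
    rw [isUnit_iff_ne_zero]
    intro h0
    obtain ⟨v, hv, hv0⟩ := Matrix.exists_mulVec_eq_zero_iff.2 h0
    have h1 : (X * (1 + W)).mulVec v = 0 := by
      rw [← Matrix.mulVec_mulVec, hv0, Matrix.mulVec_zero]
    rw [Matrix.mul_add, Matrix.mul_one, hXW] at h1
    have h2 : star v ⬝ᵥ X.mulVec v + (1/2 : ℂ) * (star v ⬝ᵥ Y.mulVec v) = 0 := by
      have h := congrArg (fun z => star v ⬝ᵥ z) h1
      simpa [Matrix.add_mulVec, Matrix.smul_mulVec, dotProduct_add,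
        dotProduct_smul, smul_eq_mul] using h
    have h3 : 2 * (star v ⬝ᵥ X.mulVec v) + (star v ⬝ᵥ Y.mulVec v) = 0 := by
      linear_combination 2 * h2
    have h4 := congrArg Complex.re h3
    obtain ⟨k1, k2, k3⟩ := key v hv
    simp only [Complex.add_re, Complex.mul_re, Complex.re_ofNat, Complex.im_ofNat,
      Complex.zero_re] at h4
    linarith
  refine ⟨hXdet, main2, ?_⟩
  intro μ hμ
  obtain ⟨u, hu, huA⟩ := hμ
  have hBinv : (1 + W) * (1 + W)⁻¹ = 1 := Matrix.mul_nonsing_inv _ main2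
  have h1 : (1 - W).mulVec u = μ • (1 + W).mulVec u := by
    have h := congrArg (fun z => (1 + W).mulVec z) huA
    simp only [Matrix.mulVec_mulVec, ← Matrix.mul_assoc, hBinv, Matrix.one_mul,
      Matrix.mulVec_smul] at h
    exact h
  have h2 : (X * (1 - W)).mulVec u = μ • (X * (1 + W)).mulVec u := by
    rw [← Matrix.mulVec_mulVec, ← Matrix.mulVec_mulVec, h1, Matrix.mulVec_smul]
  rw [Matrix.mul_sub, Matrix.mul_add, Matrix.mul_one, hXW] at h2
  have h3 : star u ⬝ᵥ X.mulVec u - (1/2 : ℂ) * (star u ⬝ᵥ Y.mulVec u)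
      = μ * (star u ⬝ᵥ X.mulVec u + (1/2 : ℂ) * (star u ⬝ᵥ Y.mulVec u)) := by
    have h := congrArg (fun z => star u ⬝ᵥ z) h2
    simpa [Matrix.sub_mulVec, Matrix.add_mulVec, Matrix.smul_mulVec, dotProduct_add,
      dotProduct_sub, dotProduct_smul, smul_eq_mul, mul_add, mul_sub] using h
  obtain ⟨k1, k2, k3⟩ := key u hu
  apply cayley_abs (star u ⬝ᵥ X.mulVec u) (star u ⬝ᵥ Y.mulVec u) μ k1 k2 k3
  linear_combination 2 * h3
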